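/- Let N = {1,…,n} be a finite set of players and η a characteristic function assigning a real value η_S to each nonempty coalition S ⊆ N. If the core C(η) is nonempty, then there exists a constant μ > 0 such that for all x ∈ R^n, dist²(x, C(η)) ≤ μ · Σ_{i=1}^n dist²(x, X_i(η)). -/

import Mathlib

open Metric Finset
open scoped RealInnerProductSpace

section Aux

variable {E : Type*} [NormedAddCommGroup E] [InnerProductSpace ℝ E]

/-- Conic Carathéodory. -/
lemma conic_cara {ι : Type*} [DecidableEq ι] (v : ι → E) (A : Finset ι) :
    ∀ l : ι → ℝ, (∀ s ∈ A, 0 ≤ l s) →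
    ∃ B ⊆ A, (LinearIndependent ℝ (fun s : B => v s)) ∧
      ∃ m : ι → ℝ, (∀ s ∈ B, 0 ≤ m s) ∧ ∑ s ∈ B, m s • v s = ∑ s ∈ A, l s • v s := by
  induction A using Finset.strongInduction with
  | _ A ih =>
    intro l hl
    by_cases hind : LinearIndependent ℝ (fun s : A => v s)
    · exact ⟨A, subset_rfl, hind, l, hl, rfl⟩
    · rw [Fintype.not_linearIndependent_iff] at hind
      obtain ⟨g0, hg0, s₁, hs₁⟩ := hind
      have key : ∀ g : A → ℝ, (∑ s : A, g s • v s = 0) → (∃ s, 0 < g s) →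
          ∃ B ⊆ A, (LinearIndependent ℝ (fun s : B => v s)) ∧
          ∃ m : ι → ℝ, (∀ s ∈ B, 0 ≤ m s) ∧ ∑ s ∈ B, m s • v s = ∑ s ∈ A, l s • v s := by
        rintro g hg ⟨sp, hsp⟩
        classical
        set Apos : Finset A := Finset.univ.filter (fun s => 0 < g s) with hApos
        have hne : Apos.Nonempty := ⟨sp, by simp [hApos, hsp]⟩
        obtain ⟨s₀, hs₀mem, hs₀min⟩ := Finset.exists_min_image Apos (fun s => l s / g s) hne
        have hg₀ : 0 < g s₀ := by simpa [hApos] using hs₀mem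
        set t : ℝ := l s₀ / g s₀ with ht
        have ht0 : 0 ≤ t := div_nonneg (hl _ s₀.2) hg₀.le
        set l' : ι → ℝ := fun s => if h : s ∈ A then l s - t * g ⟨s, h⟩ else 0 with hl'
        have hl'nonneg : ∀ s ∈ A, 0 ≤ l' s := by
          intro s hs
          simp only [hl', dif_pos hs]
          rcases le_or_gt (g ⟨s, hs⟩) 0 with h | h
          · nlinarith [hl s hs]
          · have h2 : t ≤ l s / g ⟨s, hs⟩ := hs₀min ⟨s, hs⟩ (by simp [hApos, h])
            rw [le_div_iff₀ h] at h2
            linarith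
        have hl's₀ : l' (s₀ : ι) = 0 := by
          simp only [hl', dif_pos s₀.2, Subtype.coe_eta]
          rw [ht]
          field_simp
          ring
        have hsum : ∑ s ∈ A, l' s • v s = ∑ s ∈ A, l s • v s := by
          rw [← Finset.sum_attach A (fun s => l' s • v s),
              ← Finset.sum_attach A (fun s => l s • v s)]
          have : ∀ s : A, l' (s : ι) • v (s : ι)
              = l (s : ι) • v (s : ι) - t • (g s • v (s : ι)) := by
            intro s
            simp only [hl', dif_pos s.2, Subtype.coe_eta, sub_smul, smul_smul]
          rw [Finset.sum_congr rfl (fun s _ => this s), Finset.sum_sub_distrib,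
              ← Finset.smul_sum]
          have : ∑ s ∈ A.attach, g s • v (s : ι) = 0 := by
            rw [← hg]; simp [Finset.univ_eq_attach]
          rw [this, smul_zero, sub_zero]
        have herase : ∑ s ∈ A.erase (s₀ : ι), l' s • v s = ∑ s ∈ A, l' s • v s :=
          Finset.sum_erase _ (by rw [hl's₀, zero_smul])
        obtain ⟨B, hBsub, hBind, m, hm0, hmsum⟩ :=
          ih (A.erase (s₀ : ι)) (Finset.erase_ssubset s₀.2) l'
            (fun s hs => hl'nonneg s (Finset.erase_subset _ _ hs))
        exact ⟨B, hBsub.trans (Finset.erase_subset _ _), hBind, m, hm0,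
          by rw [hmsum, herase, hsum]⟩
      rcases hs₁.lt_or_gt with h | h
      · refine key (-g0) ?_ ⟨s₁, by simpa using h⟩
        simpa [neg_smul] using congrArg Neg.neg hg0
      · exact key g0 hg0 ⟨s₁, h⟩


variable [FiniteDimensional ℝ E]

/-- For a linearly independent family, the sum of nonnegative coefficients is controlled
by the norm of the combination. -/
lemma indep_bound {ι : Type*} [Fintype ι] (v : ι → E) (h : LinearIndependent ℝ v) :
    ∃ C : ℝ, 0 ≤ C ∧ ∀ l : ι → ℝ, (∀ s, 0 ≤ l s) →
      ∑ s, l s ≤ C * ‖∑ s, l s • v s‖ := by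
  classical
  set T : (ι → ℝ) →ₗ[ℝ] E := (Fintype.linearCombination ℝ) v with hT
  have hTapp : ∀ l, T l = ∑ s, l s • v s := fun l => rfl
  have hinj : Function.Injective T := by
    rw [← LinearMap.ker_eq_bot, LinearMap.ker_eq_bot']
    intro l hl
    funext s
    exact Fintype.linearIndependent_iff.mp h l (by rw [← hTapp]; exact hl) s
  set e : (ι → ℝ) ≃ₗ[ℝ] LinearMap.range T := LinearEquiv.ofInjective T hinj with he
  set f : (LinearMap.range T) →L[ℝ] (ι → ℝ) :=
    LinearMap.toContinuousLinearMap (e.symm : (LinearMap.range T) →ₗ[ℝ] (ι → ℝ)) with hf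
  refine ⟨(Fintype.card ι) * ‖f‖, by positivity, fun l hl => ?_⟩
  have h1 : ∑ s, l s ≤ (Fintype.card ι) * ‖l‖ := by
    calc ∑ s, l s ≤ ∑ s : ι, ‖l‖ := Finset.sum_le_sum (fun s _ =>
          (le_abs_self _).trans (norm_le_pi_norm l s))
      _ = (Fintype.card ι) * ‖l‖ := by rw [Finset.sum_const, Finset.card_univ, nsmul_eq_mul]
  have h2 : ‖l‖ ≤ ‖f‖ * ‖T l‖ := by
    have : f ⟨T l, LinearMap.mem_range_self T l⟩ = l := by
      have h3 : e l = ⟨T l, LinearMap.mem_range_self T l⟩ := rfl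
      have := e.symm_apply_apply l
      rw [h3] at this
      exact this
    calc ‖l‖ = ‖f ⟨T l, LinearMap.mem_range_self T l⟩‖ := by rw [this]
      _ ≤ ‖f‖ * ‖(⟨T l, LinearMap.mem_range_self T l⟩ : LinearMap.range T)‖ := f.le_opNorm _
      _ = ‖f‖ * ‖T l‖ := by rw [Submodule.coe_norm]
  rw [← hTapp]
  calc ∑ s, l s ≤ (Fintype.card ι) * ‖l‖ := h1
    _ ≤ (Fintype.card ι) * (‖f‖ * ‖T l‖) := by
        apply mul_le_mul_of_nonneg_left h2 (by positivity)
    _ = (Fintype.card ι) * ‖f‖ * ‖T l‖ := by ring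


/-- The cone generated by finitely many vectors is closed. -/
lemma cone_isClosed {ι : Type*} [DecidableEq ι] (v : ι → E) (A : Finset ι) :
    IsClosed {z : E | ∃ l : ι → ℝ, (∀ s, 0 ≤ l s) ∧ z = ∑ s ∈ A, l s • v s} := by
  classical
  -- D B : cone over an independent subset B
  have key : ∀ B : Finset ι, (LinearIndependent ℝ (fun s : B => v s)) →
      IsClosed {z : E | ∃ m : B → ℝ, (∀ s, 0 ≤ m s) ∧ z = ∑ s : B, m s • v (s : ι)} := by
    intro B hB
    set T : (B → ℝ) →ₗ[ℝ] E := (Fintype.linearCombination ℝ) (fun s : B => v s) with hT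
    have hinj : LinearMap.ker T = ⊥ := by
      rw [LinearMap.ker_eq_bot']
      intro m hm
      funext s
      exact Fintype.linearIndependent_iff.mp hB m hm s
    have hemb := LinearMap.isClosedEmbedding_of_injective hinj
    have horth : IsClosed {m : B → ℝ | ∀ s, 0 ≤ m s} := by
      have : {m : B → ℝ | ∀ s, 0 ≤ m s} = ⋂ s : B, {m | 0 ≤ m s} :=
        Set.ext fun m => by simp
      rw [this]
      exact isClosed_iInter fun s => isClosed_le continuous_const (continuous_apply s)
    have himg : {z : E | ∃ m : B → ℝ, (∀ s, 0 ≤ m s) ∧ z = ∑ s : B, m s • v (s : ι)}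
        = T '' {m : B → ℝ | ∀ s, 0 ≤ m s} := by
      ext z
      constructor
      · rintro ⟨m, hm, rfl⟩; exact ⟨m, hm, rfl⟩
      · rintro ⟨m, hm, rfl⟩; exact ⟨m, hm, rfl⟩
    rw [himg]
    exact hemb.isClosedMap _ horth
  -- the union
  set 𝒮 : Finset (Finset ι) :=
    A.powerset.filter (fun B => LinearIndependent ℝ (fun s : B => v s)) with h𝒮
  have hunion : {z : E | ∃ l : ι → ℝ, (∀ s, 0 ≤ l s) ∧ z = ∑ s ∈ A, l s • v s}
      = ⋃ B ∈ 𝒮, {z : E | ∃ m : B → ℝ, (∀ s, 0 ≤ m s) ∧ z = ∑ s : B, m s • v (s : ι)} := by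
    ext z
    simp only [Set.mem_iUnion, Set.mem_setOf_eq]
    constructor
    · rintro ⟨l, hl, rfl⟩
      obtain ⟨B, hBA, hBind, m, hm0, hmsum⟩ := conic_cara v A l (fun s _ => hl s)
      refine ⟨B, by simp [h𝒮, Finset.mem_powerset, hBA, hBind], fun s => max (m s) 0,
        fun s => le_max_right _ _, ?_⟩
      rw [← hmsum, ← Finset.sum_attach B (fun s => m s • v s), Finset.univ_eq_attach]
      refine Finset.sum_congr rfl fun s _ => ?_
      simp [max_eq_left (hm0 _ s.2)]
    · rintro ⟨B, hB, m, hm0, rfl⟩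
      have hBA : B ⊆ A := Finset.mem_powerset.mp (Finset.mem_filter.mp hB).1
      refine ⟨fun s => if h : s ∈ B then m ⟨s, h⟩ else 0,
        fun s => by by_cases h : s ∈ B <;> simp [h, hm0], ?_⟩
      rw [← Finset.sum_subset hBA (fun s _ hs => by simp [hs])]
      rw [← Finset.sum_attach B (fun s => (if h : s ∈ B then m ⟨s, h⟩ else 0) • v s),
        Finset.univ_eq_attach]
      refine Finset.sum_congr rfl fun s _ => ?_
      simp [s.2]
  rw [hunion]
  refine Set.Finite.isClosed_biUnion 𝒮.finite_toSet fun B hB => ?_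
  exact key B (Finset.mem_filter.mp hB).2


/-- Hoffman-type error bound for a polyhedron given by inner-product inequalities. -/
lemma hoffman {ι : Type*} [Fintype ι] [DecidableEq ι] (a : ι → E) (b : ι → ℝ)
    (P : Set E) (hP : P = {x : E | ∀ s, b s ≤ ⟪a s, x⟫}) (hne : P.Nonempty) :
    ∃ κ : ℝ, 0 ≤ κ ∧ ∀ x : E, infDist x P ≤ κ * ∑ s, max (b s - ⟪a s, x⟫) 0 := by
  classical
  set v : ι → E := fun s => -(a s) with hv
  -- the uniform constant
  set g : Finset ι → ℝ := fun B =>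
    if h : LinearIndependent ℝ (fun s : B => v s) then (indep_bound (fun s : B => v s) h).choose
    else 0 with hg
  have hg0 : ∀ B, 0 ≤ g B := by
    intro B
    by_cases h : LinearIndependent ℝ (fun s : B => v s)
    · rw [hg]; simp only [dif_pos h]
      exact (indep_bound (fun s : B => v s) h).choose_spec.1
    · rw [hg]; simp [dif_neg h]
  set κ : ℝ := ∑ B ∈ (Finset.univ : Finset ι).powerset, g B with hκ
  have hκ0 : 0 ≤ κ := Finset.sum_nonneg fun B _ => hg0 B
  have hgκ : ∀ B : Finset ι, g B ≤ κ :=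
    fun B => Finset.single_le_sum (fun B _ => hg0 B) (Finset.mem_powerset.mpr (Finset.subset_univ B))
  refine ⟨κ, hκ0, fun x => ?_⟩
  -- the polyhedron is closed convex nonempty
  have hPclosed : IsClosed P := by
    rw [hP]
    have : {x : E | ∀ s, b s ≤ ⟪a s, x⟫} = ⋂ s, {x | b s ≤ ⟪a s, x⟫} :=
      Set.ext fun x => by simp
    rw [this]
    exact isClosed_iInter fun s =>
      isClosed_le continuous_const (Continuous.inner continuous_const continuous_id)
  have hPconv : Convex ℝ P := by
    rw [hP]
    intro x hx y hy p q hp hq hpq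
    intro s
    have hx' := hx s
    have hy' := hy s
    rw [inner_add_right, real_inner_smul_right, real_inner_smul_right]
    calc b s = p * b s + q * b s := by rw [← add_mul, hpq, one_mul]
      _ ≤ p * ⟪a s, x⟫ + q * ⟪a s, y⟫ :=
        add_le_add (mul_le_mul_of_nonneg_left hx' hp) (mul_le_mul_of_nonneg_left hy' hq)
  -- projection
  obtain ⟨y, hyP, hynorm⟩ :=
    exists_norm_eq_iInf_of_complete_convex hne (hPclosed.isComplete) hPconv x
  have hproj : ∀ w ∈ P, ⟪x - y, w - y⟫ ≤ 0 :=
    (norm_eq_iInf_iff_real_inner_le_zero hPconv hyP).mp hynorm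
  have hdist : infDist x P = ‖x - y‖ := by
    rw [infDist_eq_iInf, hynorm]
    congr 1
    funext w
    rw [dist_eq_norm]
  -- residual, nonneg
  set R : ℝ := ∑ s, max (b s - ⟪a s, x⟫) 0 with hR
  have hR0 : 0 ≤ R := Finset.sum_nonneg fun s _ => le_max_right _ _
  have hRterm : ∀ s, b s - ⟪a s, x⟫ ≤ R := by
    intro s
    rw [hR]
    calc b s - ⟪a s, x⟫ ≤ max (b s - ⟪a s, x⟫) 0 := le_max_left _ _
      _ ≤ _ := Finset.single_le_sum (f := fun t => max (b t - ⟪a t, x⟫) 0)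
        (fun t _ => le_max_right _ _) (Finset.mem_univ s)
  -- active constraints
  set A : Finset ι := Finset.univ.filter (fun s => ⟪a s, y⟫ = b s) with hA
  -- the normal cone
  set C : Set E := {z : E | ∃ l : ι → ℝ, (∀ s, 0 ≤ l s) ∧ z = ∑ s ∈ A, l s • v s} with hC
  have hC0 : (0 : E) ∈ C := ⟨0, fun s => le_refl 0, by simp⟩
  have hCconv : Convex ℝ C := by
    rintro z₁ ⟨l₁, hl₁, rfl⟩ z₂ ⟨l₂, hl₂, rfl⟩ p q hp hq hpq
    refine ⟨fun s => p * l₁ s + q * l₂ s,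
      fun s => by have := hl₁ s; have := hl₂ s; positivity, ?_⟩
    rw [Finset.smul_sum, Finset.smul_sum, ← Finset.sum_add_distrib]
    refine Finset.sum_congr rfl fun s _ => ?_
    rw [add_smul, smul_smul, smul_smul]
  have hCclosed : IsClosed C := cone_isClosed v A
  -- x - y belongs to the normal cone
  have hmem : x - y ∈ C := by
    by_contra hxy
    obtain ⟨f, u, hfu, hux⟩ := geometric_hahn_banach_closed_point hCconv hCclosed hxy
    have hu0 : 0 < u := by simpa using hfu 0 hC0
    have hfa : ∀ s ∈ A, 0 ≤ f (a s) := by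
      intro s hs
      by_contra hneg
      push_neg at hneg
      have hfv : 0 < f (v s) := by simp [hv, hneg]
      have htC : ∀ t : ℝ, 0 ≤ t → t • v s ∈ C := by
        intro t ht
        refine ⟨fun r => if r = s then t else 0,
          fun r => by by_cases h : r = s <;> simp [h, ht], ?_⟩
        have hterm : ∀ r ∈ A, (if r = s then t else 0) • v r
            = if r = s then t • v r else 0 := by
          intro r _; by_cases h : r = s <;> simp [h]
        rw [Finset.sum_congr rfl hterm, Finset.sum_ite_eq' A s (fun r => t • v r), if_pos hs]
      have hlarge := hfu (((u + 1) / f (v s)) • v s) (htC _ (by positivity))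
      rw [map_smul, smul_eq_mul, div_mul_cancel₀ _ hfv.ne'] at hlarge
      linarith
    -- Riesz representation
    set d : E := (InnerProductSpace.toDual ℝ E).symm f with hd
    have hdinner : ∀ w : E, ⟪d, w⟫ = f w := fun w =>
      InnerProductSpace.toDual_symm_apply
    -- find small positive t with y + t • d ∈ P
    have hev : ∀ᶠ t in nhdsWithin (0:ℝ) (Set.Ioi 0), ∀ s, b s ≤ ⟪a s, y + t • d⟫ := by
      rw [Filter.eventually_all]
      intro s
      by_cases hs : s ∈ A
      · refine Filter.eventually_of_mem self_mem_nhdsWithin (fun t ht => ?_)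
        have hts : (0:ℝ) < t := ht
        have : ⟪a s, y⟫ = b s := (Finset.mem_filter.mp hs).2
        rw [inner_add_right, real_inner_smul_right, this]
        have : 0 ≤ ⟪a s, d⟫ := by
          rw [real_inner_comm, hdinner]
          exact hfa s hs
        nlinarith
      · have hslack : b s < ⟪a s, y⟫ := by
          have h1 : b s ≤ ⟪a s, y⟫ := by
            rw [hP] at hyP; exact hyP s
          rcases lt_or_eq_of_le h1 with h | h
          · exact h
          · exact absurd (Finset.mem_filter.mpr ⟨Finset.mem_univ s, h.symm⟩) hs
        have hcont : ContinuousAt (fun t : ℝ => ⟪a s, y + t • d⟫) 0 := by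
          apply Continuous.continuousAt
          exact Continuous.inner continuous_const
            (continuous_const.add (continuous_id.smul continuous_const))
        have hval : b s < (fun t : ℝ => ⟪a s, y + t • d⟫) 0 := by simpa using hslack
        have hev0 := continuousAt_const.eventually_lt hcont (by simpa using hslack)
        exact nhdsWithin_le_nhds (hev0.mono (fun t ht => le_of_lt ht))
    obtain ⟨t, htP, ht⟩ := (hev.and eventually_mem_nhdsWithin).exists
    have htpos : (0:ℝ) < t := ht
    have hwP : y + t • d ∈ P := by rw [hP]; exact htP
    have h1 : ⟪x - y, (y + t • d) - y⟫ ≤ 0 := hproj _ hwP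
    rw [add_sub_cancel_left, real_inner_smul_right] at h1
    have h2 : ⟪x - y, d⟫ = f (x - y) := by rw [real_inner_comm]; exact hdinner _
    nlinarith
  -- use the conic representation to bound the distance
  obtain ⟨l, hl0, hlrep⟩ := hmem
  obtain ⟨B, hBA, hBind, m, hm0, hmsum⟩ := conic_cara v A l (fun s _ => hl0 s)
  have hrepr : ∑ s ∈ B, m s • v s = x - y := by rw [hmsum, ← hlrep]
  have hnormsq : ‖x - y‖ ^ 2 = ∑ s ∈ B, m s * (b s - ⟪a s, x⟫) := by
    rw [← real_inner_self_eq_norm_sq]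
    conv_lhs => rw [← hrepr]
    rw [sum_inner]
    simp only [hrepr]
    refine Finset.sum_congr rfl fun s hsB => ?_
    rw [real_inner_smul_left]
    congr 1
    have hact : ⟪a s, y⟫ = b s := (Finset.mem_filter.mp (hBA hsB)).2
    have hvs : (⟪v s, x - y⟫ : ℝ) = ⟪a s, y⟫ - ⟪a s, x⟫ := by
      simp only [hv, inner_neg_left, inner_sub_right]
      ring
    rw [hact] at hvs
    exact hvs
  -- sum of coefficients bound via independence
  have hmbound : ∑ s ∈ B, m s ≤ g B * ‖x - y‖ := by
    have hspec := (indep_bound (fun s : B => v s) hBind).choose_spec.2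
      (fun s : B => m s) (fun s => hm0 _ s.2)
    have hgB : g B = (indep_bound (fun s : B => v s) hBind).choose := by
      rw [hg]; simp only [dif_pos hBind]
    rw [hgB]
    have e1 : ∑ s : B, m (s : ι) = ∑ s ∈ B, m s := by
      rw [Finset.univ_eq_attach, Finset.sum_attach B (fun s => m s)]
    have e2 : ∑ s : B, m (s : ι) • v (s : ι) = ∑ s ∈ B, m s • v s := by
      rw [Finset.univ_eq_attach, Finset.sum_attach B (fun s => m s • v s)]
    rw [e1, e2, hrepr] at hspec
    exact hspec
  have hfinal : ‖x - y‖ ^ 2 ≤ κ * ‖x - y‖ * R := by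
    calc ‖x - y‖ ^ 2 = ∑ s ∈ B, m s * (b s - ⟪a s, x⟫) := hnormsq
      _ ≤ ∑ s ∈ B, m s * R := Finset.sum_le_sum fun s hsB =>
          mul_le_mul_of_nonneg_left (hRterm s) (hm0 s hsB)
      _ = (∑ s ∈ B, m s) * R := by rw [Finset.sum_mul]
      _ ≤ (g B * ‖x - y‖) * R := mul_le_mul_of_nonneg_right hmbound hR0
      _ ≤ (κ * ‖x - y‖) * R := by
          apply mul_le_mul_of_nonneg_right _ hR0
          exact mul_le_mul_of_nonneg_right (hgκ B) (norm_nonneg _)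
  rw [hdist]
  rcases eq_or_lt_of_le (norm_nonneg (x - y)) with h0 | h0
  · rw [← h0]; positivity
  · nlinarith


theorem stmt2 {n : ℕ} (η : Finset (Fin n) → ℝ)
    (core : Set (EuclideanSpace ℝ (Fin n)))
    (hcore : core = {x | (∑ j, x j) = η Finset.univ ∧
      ∀ S : Finset (Fin n), S.Nonempty → S ⊂ Finset.univ → η S ≤ ∑ j ∈ S, x j})
    (Xb : Fin n → Set (EuclideanSpace ℝ (Fin n)))
    (hXb : ∀ i, Xb i = {x | (∑ j, x j) = η Finset.univ ∧
      ∀ S : Finset (Fin n), S ⊂ Finset.univ → i ∈ S → η S ≤ ∑ j ∈ S, x j})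
    (hne : core.Nonempty) :
    ∃ μ > (0 : ℝ), ∀ x : EuclideanSpace ℝ (Fin n),
      infDist x core ^ 2 ≤ μ * ∑ i, infDist x (Xb i) ^ 2 := by
  classical
  rcases Nat.eq_zero_or_pos n with hn | hn
  · subst hn
    refine ⟨1, one_pos, fun x => ?_⟩
    obtain ⟨z, hz⟩ := hne
    have hsub : Subsingleton (EuclideanSpace ℝ (Fin 0)) :=
      (EuclideanSpace.equiv (Fin 0) ℝ).subsingleton
    have hxz : x = z := Subsingleton.elim x z
    rw [hxz, infDist_zero_of_mem hz]
    simp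
  · -- main case n ≥ 1
    set ι := ({S : Finset (Fin n) // S.Nonempty ∧ S ⊂ Finset.univ}) ⊕ Bool with hι
    set a : ι → EuclideanSpace ℝ (Fin n) := fun s => match s with
      | Sum.inl S => WithLp.toLp 2 (fun j => if j ∈ S.1 then (1:ℝ) else 0)
      | Sum.inr true => WithLp.toLp 2 (fun _ => (1:ℝ))
      | Sum.inr false => WithLp.toLp 2 (fun _ => (-1:ℝ)) with ha
    set b : ι → ℝ := fun s => match s with
      | Sum.inl S => η S.1
      | Sum.inr true => η Finset.univ
      | Sum.inr false => -η Finset.univ with hb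
    have hinner1 : ∀ (x : EuclideanSpace ℝ (Fin n)) (S : {S : Finset (Fin n) // S.Nonempty ∧ S ⊂ Finset.univ}),
        ⟪a (Sum.inl S), x⟫ = ∑ j ∈ S.1, x j := by
      intro x S
      rw [ha]
      simp only [PiLp.inner_apply, RCLike.inner_apply, conj_trivial, PiLp.toLp_apply]
      have hterm : ∀ j ∈ Finset.univ, x j * (if j ∈ S.1 then (1:ℝ) else 0)
          = if j ∈ S.1 then x j else 0 := fun j _ => by
        by_cases h : j ∈ S.1 <;> simp [h]
      rw [Finset.sum_congr rfl hterm, Finset.sum_ite_mem, Finset.univ_inter]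
    have hinner2 : ∀ (x : EuclideanSpace ℝ (Fin n)),
        ⟪a (Sum.inr true), x⟫ = ∑ j, x j := by
      intro x
      rw [ha]
      simp [PiLp.inner_apply, RCLike.inner_apply, conj_trivial, PiLp.toLp_apply]
    have hinner3 : ∀ (x : EuclideanSpace ℝ (Fin n)),
        ⟪a (Sum.inr false), x⟫ = -∑ j, x j := by
      intro x
      rw [ha]
      simp [PiLp.inner_apply, RCLike.inner_apply, conj_trivial, Finset.sum_neg_distrib, PiLp.toLp_apply]
    have hcoreP : core = {x : EuclideanSpace ℝ (Fin n) | ∀ s : ι, b s ≤ ⟪a s, x⟫} := by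
      rw [hcore]
      ext x
      simp only [Set.mem_setOf_eq]
      constructor
      · rintro ⟨hsum, hS⟩ s
        match s with
        | Sum.inl S => rw [hinner1]; exact hS S.1 S.2.1 S.2.2
        | Sum.inr true => rw [hinner2, hb]; exact le_of_eq hsum.symm
        | Sum.inr false => rw [hinner3, hb]; simp [hsum]
      · intro h
        refine ⟨?_, fun S hSne hSsub => ?_⟩
        · have h1 := h (Sum.inr true); rw [hinner2] at h1
          have h2 := h (Sum.inr false); rw [hinner3] at h2
          rw [hb] at h1 h2
          simp only at h1 h2
          linarith
        · have h1 := h (Sum.inl ⟨S, hSne, hSsub⟩)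
          rw [hinner1] at h1
          exact h1
    obtain ⟨κ, hκ0, hκ⟩ := hoffman a b core hcoreP hne
    -- Xb i facts
    have hXsub : ∀ i, core ⊆ Xb i := by
      intro i x hx
      rw [hcore] at hx
      rw [hXb]
      exact ⟨hx.1, fun S hSsub hiS => hx.2 S ⟨i, hiS⟩ hSsub⟩
    have hXne : ∀ i, (Xb i).Nonempty := fun i => hne.mono (hXsub i)
    have hXclosed : ∀ i, IsClosed (Xb i) := by
      intro i
      rw [hXb]
      have hs : Continuous (fun x : EuclideanSpace ℝ (Fin n) => ∑ j, x j) :=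
        continuous_finset_sum _ fun j _ => (EuclideanSpace.proj j).continuous
      have h1 : IsClosed {x : EuclideanSpace ℝ (Fin n) | (∑ j, x j) = η Finset.univ} :=
        isClosed_eq hs continuous_const
      have h2 : ∀ S : Finset (Fin n), IsClosed {x : EuclideanSpace ℝ (Fin n) | η S ≤ ∑ j ∈ S, x j} :=
        fun S => isClosed_le continuous_const
          (continuous_finset_sum _ fun j _ => (EuclideanSpace.proj j).continuous)
      have : {x : EuclideanSpace ℝ (Fin n) | (∑ j, x j) = η Finset.univ ∧
          ∀ S : Finset (Fin n), S ⊂ Finset.univ → i ∈ S → η S ≤ ∑ j ∈ S, x j}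
          = {x | (∑ j, x j) = η Finset.univ} ∩
            ⋂ (S : Finset (Fin n)) (_ : S ⊂ Finset.univ) (_ : i ∈ S),
              {x : EuclideanSpace ℝ (Fin n) | η S ≤ ∑ j ∈ S, x j} := by
        ext x
        simp only [Set.mem_inter_iff, Set.mem_iInter, Set.mem_setOf_eq]
      rw [this]
      exact h1.inter (isClosed_iInter fun S => isClosed_iInter fun _ =>
        isClosed_iInter fun _ => h2 S)
    -- pick an index for each constraint
    set pick : ι → Fin n := fun s => match s with
      | Sum.inl S => S.2.1.choose
      | Sum.inr _ => ⟨0, hn⟩ with hpick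
    -- residual bound
    have hkey : ∀ (s : ι) (x : EuclideanSpace ℝ (Fin n)),
        max (b s - ⟪a s, x⟫) 0 ≤ ‖a s‖ * infDist x (Xb (pick s)) := by
      intro s x
      obtain ⟨z, hzmem, hzdist⟩ := (hXclosed (pick s)).exists_infDist_eq_dist (hXne _) x
      have hzX := hzmem
      rw [hXb] at hzX
      have hz : b s ≤ ⟪a s, z⟫ := by
        match s with
        | Sum.inl S =>
            rw [hinner1]
            exact hzX.2 S.1 S.2.2 S.2.1.choose_spec
        | Sum.inr true => rw [hinner2, hb]; exact le_of_eq hzX.1.symm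
        | Sum.inr false => rw [hinner3, hb]; simp [hzX.1]
      rw [hzdist]
      refine max_le ?_ (by positivity)
      calc b s - ⟪a s, x⟫ ≤ ⟪a s, z⟫ - ⟪a s, x⟫ := by linarith
        _ = ⟪a s, z - x⟫ := by rw [inner_sub_right]
        _ ≤ ‖a s‖ * ‖z - x‖ := real_inner_le_norm _ _
        _ = ‖a s‖ * dist x z := by rw [dist_eq_norm, norm_sub_rev]
    refine ⟨κ ^ 2 * (∑ s : ι, ‖a s‖) ^ 2 + 1, by positivity, fun x => ?_⟩
    set T : ℝ := ∑ i, infDist x (Xb i) ^ 2 with hT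
    have hT0 : 0 ≤ T := Finset.sum_nonneg fun i _ => sq_nonneg _
    have hid : ∀ i, infDist x (Xb i) ≤ Real.sqrt T := by
      intro i
      rw [Real.le_sqrt (infDist_nonneg) hT0]
      exact Finset.single_le_sum (f := fun i => infDist x (Xb i) ^ 2)
        (fun i _ => sq_nonneg _) (Finset.mem_univ i)
    have hM : ∑ s : ι, max (b s - ⟪a s, x⟫) 0 ≤ (∑ s : ι, ‖a s‖) * Real.sqrt T := by
      rw [Finset.sum_mul]
      refine Finset.sum_le_sum fun s _ => ?_
      exact (hkey s x).trans (mul_le_mul_of_nonneg_left (hid _) (norm_nonneg _))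
    have hfin : infDist x core ≤ κ * ((∑ s : ι, ‖a s‖) * Real.sqrt T) :=
      (hκ x).trans (mul_le_mul_of_nonneg_left hM hκ0)
    have hsq : infDist x core ^ 2 ≤ (κ * ((∑ s : ι, ‖a s‖) * Real.sqrt T)) ^ 2 :=
      pow_le_pow_left₀ infDist_nonneg hfin 2
    calc infDist x core ^ 2 ≤ (κ * ((∑ s : ι, ‖a s‖) * Real.sqrt T)) ^ 2 := hsq
      _ = κ ^ 2 * (∑ s : ι, ‖a s‖) ^ 2 * (Real.sqrt T ^ 2) := by ring
      _ = κ ^ 2 * (∑ s : ι, ‖a s‖) ^ 2 * T := by rw [Real.sq_sqrt hT0]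
      _ ≤ (κ ^ 2 * (∑ s : ι, ‖a s‖) ^ 2 + 1) * T := by nlinarith


end Aux
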